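/- Let n ≥ 1 and let G be a real n×n matrix with zero diagonal all of whose entries are nonnegative (a game of strategic substitutes). Then for every q ∈ ℝⁿ the public-good provision game with parameters (G, q) has at least one Nash equilibrium. -/

import Mathlib

open Matrix Finset

/-- Nash equilibrium of the public-good provision game with parameters `(G, q)`. -/
def NashEq {n : ℕ} (G : Matrix (Fin n) (Fin n) ℝ) (q x : Fin n → ℝ) : Prop :=
  ∀ i, x i = max 0 (q i - ∑ j ∈ Finset.univ.erase i, G i j * x j)

namespace PGAux
open scoped Classical

noncomputable section

variable {n : ℕ}

/-- `I + G` (the diagonal of `G` is irrelevant). -/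
def Mm (G : Matrix (Fin n) (Fin n) ℝ) : Matrix (Fin n) (Fin n) ℝ :=
  Matrix.of fun i j => if i = j then 1 else G i j

/-- Piece matrix of the PL map `z ↦ M z⁺ + z∧0` for sign pattern `σ`. -/
def Am (G : Matrix (Fin n) (Fin n) ℝ) (σ : Fin n → Bool) : Matrix (Fin n) (Fin n) ℝ :=
  Matrix.of fun i j => if σ j then Mm G i j else if i = j then 1 else 0

def sgn (σ : Fin n → Bool) (i : Fin n) : ℝ := if σ i then 1 else -1

lemma row_id (G : Matrix (Fin n) (Fin n) ℝ) (σ : Fin n → Bool) (z q : Fin n → ℝ)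
    (hz : Am G σ *ᵥ z = q) (hsgn : ∀ j, if σ j then 0 ≤ z j else z j ≤ 0) (i : Fin n) :
    q i = max (z i) 0 + (∑ j ∈ Finset.univ.erase i, G i j * max (z j) 0)
      + (if σ i then 0 else z i) := by
  have hq : q i = ∑ j, Am G σ i j * z j := by
    rw [← hz]; simp [Matrix.mulVec, dotProduct]
  have key : ∀ j, Am G σ i j * z j
      = Mm G i j * max (z j) 0 + (if j = i then (if σ i then 0 else z i) else 0) := by
    intro j
    have hs := hsgn j
    cases hσj : σ j with
    | true =>
      rw [hσj] at hs; simp only [if_pos] at hs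
      have hx : max (z j) 0 = z j := max_eq_left hs
      by_cases hij : j = i
      · subst hij
        simp [Am, hσj, hx]
      · simp [Am, hσj, hx, hij]
    | false =>
      rw [hσj] at hs; simp only [Bool.false_eq_true, if_neg, if_false] at hs
      have hx : max (z j) 0 = 0 := max_eq_right hs
      by_cases hij : j = i
      · subst hij
        simp [Am, Mm, hσj, hx]
      · have : Am G σ i j = 0 := by simp [Am, hσj, Ne.symm hij]
        simp [this, hx, hij]
  rw [hq]
  rw [Finset.sum_congr rfl (fun j _ => key j)]
  rw [Finset.sum_add_distrib]
  have h1 : ∑ j, (if j = i then (if σ i then 0 else z i) else 0) = (if σ i then 0 else z i) := by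
    simp
  rw [h1]
  congr 1
  have h2 : ∑ j, Mm G i j * max (z j) 0
      = Mm G i i * max (z i) 0 + ∑ j ∈ Finset.univ.erase i, Mm G i j * max (z j) 0 :=
    (Finset.add_sum_erase _ _ (Finset.mem_univ i)).symm
  rw [h2]
  have h3 : Mm G i i = 1 := by simp [Mm]
  rw [h3, one_mul]
  congr 1
  refine Finset.sum_congr rfl fun j hj => ?_
  have hji : j ≠ i := Finset.ne_of_mem_erase hj
  simp [Mm, Ne.symm hji]

lemma nash_of_signed (G : Matrix (Fin n) (Fin n) ℝ) (σ : Fin n → Bool) (z q : Fin n → ℝ)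
    (hz : Am G σ *ᵥ z = q) (hsgn : ∀ j, if σ j then 0 ≤ z j else z j ≤ 0) :
    NashEq G q (fun i => max (z i) 0) := by
  intro i
  have h := row_id G σ z q hz hsgn i
  have hs := hsgn i
  cases hσ : σ i with
  | true =>
    rw [hσ] at h hs; simp only [if_pos] at h hs
    have : q i - ∑ j ∈ Finset.univ.erase i, G i j * max (z j) 0 = max (z i) 0 := by
      rw [h]; ring
    show max (z i) 0 = max 0 (q i - ∑ j ∈ Finset.univ.erase i, G i j * max (z j) 0)
    rw [this]
    exact (max_eq_right (le_max_right _ _)).symm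
  | false =>
    rw [hσ] at h hs; simp only [Bool.false_eq_true, if_neg, if_false] at h hs
    have hx : max (z i) 0 = 0 := max_eq_right hs
    have : q i - ∑ j ∈ Finset.univ.erase i, G i j * max (z j) 0 = z i := by
      rw [h, hx]; ring
    show max (z i) 0 = max 0 (q i - ∑ j ∈ Finset.univ.erase i, G i j * max (z j) 0)
    rw [this, hx]
    exact (max_eq_left hs).symm


def zf (G : Matrix (Fin n) (Fin n) ℝ) (σ : Fin n → Bool) (q : Fin n → ℝ) : Fin n → ℝ :=
  (Am G σ)⁻¹ *ᵥ q

lemma zf_spec (G : Matrix (Fin n) (Fin n) ℝ) (σ : Fin n → Bool)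
    (hdet : (Am G σ).det ≠ 0) (q : Fin n → ℝ) : Am G σ *ᵥ zf G σ q = q := by
  rw [zf, Matrix.mulVec_mulVec, Matrix.mul_nonsing_inv _ (isUnit_iff_ne_zero.mpr hdet),
    Matrix.one_mulVec]

lemma zf_unique (G : Matrix (Fin n) (Fin n) ℝ) (σ : Fin n → Bool)
    (hdet : (Am G σ).det ≠ 0) (z : Fin n → ℝ) : zf G σ (Am G σ *ᵥ z) = z := by
  rw [zf, Matrix.mulVec_mulVec, Matrix.nonsing_inv_mul _ (isUnit_iff_ne_zero.mpr hdet),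
    Matrix.one_mulVec]

def Val (G : Matrix (Fin n) (Fin n) ℝ) (σ : Fin n → Bool) (q : Fin n → ℝ) : Prop :=
  ∀ i, 0 < sgn σ i * zf G σ q i

lemma val_weak_signs (G : Matrix (Fin n) (Fin n) ℝ) (σ : Fin n → Bool) (q : Fin n → ℝ)
    (hval : Val G σ q) : ∀ j, if σ j then 0 ≤ zf G σ q j else zf G σ q j ≤ 0 := by
  intro j
  have h := hval j
  unfold sgn at h
  cases hσ : σ j with
  | true => rw [hσ] at h; simp at h ⊢; linarith
  | false => rw [hσ] at h; simp at h ⊢; linarith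

lemma val_nash (G : Matrix (Fin n) (Fin n) ℝ) (σ : Fin n → Bool) (q : Fin n → ℝ)
    (hdet : (Am G σ).det ≠ 0) (hval : Val G σ q) : ∃ x, NashEq G q x :=
  ⟨_, nash_of_signed G σ (zf G σ q) q (zf_spec G σ hdet q) (val_weak_signs G σ q hval)⟩

lemma Am_false (G : Matrix (Fin n) (Fin n) ℝ) : Am G (fun _ => false) = 1 := by
  ext i j
  simp [Am, Matrix.one_apply]

lemma zf_false (G : Matrix (Fin n) (Fin n) ℝ) (q : Fin n → ℝ) :
    zf G (fun _ => false) q = q := by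
  rw [zf, Am_false, inv_one, Matrix.one_mulVec]

lemma val_false (G : Matrix (Fin n) (Fin n) ℝ) (p : Fin n → ℝ) (hp : ∀ i, p i < 0) :
    Val G (fun _ => false) p := by
  intro i
  rw [zf_false]
  simp only [sgn, Bool.false_eq_true, if_false, neg_one_mul]
  linarith [hp i]

lemma val_neg_unique (G : Matrix (Fin n) (Fin n) ℝ) (hsub : ∀ i j, 0 ≤ G i j)
    (p : Fin n → ℝ) (hp : ∀ i, p i < 0) (σ : Fin n → Bool)
    (hdet : (Am G σ).det ≠ 0) (hval : Val G σ p) : σ = fun _ => false := by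
  by_contra hne
  have : ∃ i, σ i = true := by
    by_contra hall
    push_neg at hall
    exact hne (funext fun i => by simpa using hall i)
  obtain ⟨i, hi⟩ := this
  have hq := row_id G σ (zf G σ p) p (zf_spec G σ hdet p) (val_weak_signs G σ p hval) i
  rw [hi] at hq
  simp only [if_pos] at hq
  have hzi : 0 < zf G σ p i := by
    have h := hval i
    unfold sgn at h
    rw [hi] at h
    simpa using h
  have hS : 0 ≤ ∑ j ∈ Finset.univ.erase i, G i j * max (zf G σ p j) 0 :=
    Finset.sum_nonneg fun j _ => mul_nonneg (hsub i j) (le_max_right _ _)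
  have : 0 < p i := by
    rw [hq]
    have : 0 < max (zf G σ p i) 0 := lt_max_of_lt_left hzi
    linarith
  linarith [hp i]

lemma dot_self_pos {u : Fin n → ℝ} (hu : u ≠ 0) : 0 < u ⬝ᵥ u := by
  have h1 : 0 ≤ u ⬝ᵥ u := Finset.sum_nonneg fun j _ => mul_self_nonneg _
  rcases h1.lt_or_eq with h | h
  · exact h
  · exact absurd (dotProduct_self_eq_zero.mp h.symm) hu

lemma functional_prop {u v : Fin n → ℝ} (hu : u ≠ 0) (hv : v ≠ 0)
    (h : ∀ q, u ⬝ᵥ q = 0 → v ⬝ᵥ q = 0) :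
    ∃ c : ℝ, c ≠ 0 ∧ ∀ q, v ⬝ᵥ q = c * (u ⬝ᵥ q) := by
  have huu : (0:ℝ) < u ⬝ᵥ u := dot_self_pos hu
  have key : ∀ q, v ⬝ᵥ q = ((v ⬝ᵥ u) / (u ⬝ᵥ u)) * (u ⬝ᵥ q) := by
    intro q
    have h0 : u ⬝ᵥ (q - ((u ⬝ᵥ q) / (u ⬝ᵥ u)) • u) = 0 := by
      rw [dotProduct_sub, dotProduct_smul, smul_eq_mul]
      rw [div_mul_cancel₀ _ huu.ne', sub_self]
    have h2 := h _ h0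
    rw [dotProduct_sub, dotProduct_smul, sub_eq_zero] at h2
    rw [h2]
    simp only [smul_eq_mul]
    field_simp
  refine ⟨(v ⬝ᵥ u) / (u ⬝ᵥ u), ?_, key⟩
  intro hc
  have := key v
  rw [hc, zero_mul] at this
  exact hv (dotProduct_self_eq_zero.mp this)

lemma row_ne_zero (G : Matrix (Fin n) (Fin n) ℝ) (σ : Fin n → Bool)
    (hdet : (Am G σ).det ≠ 0) (i : Fin n) : (Am G σ)⁻¹ i ≠ 0 := by
  intro h0
  have h1 := Matrix.nonsing_inv_mul (Am G σ) (isUnit_iff_ne_zero.mpr hdet)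
  have h2 : ((Am G σ)⁻¹ * Am G σ) i i = 0 := by
    rw [Matrix.mul_apply]
    refine Finset.sum_eq_zero fun j _ => ?_
    rw [congrFun h0 j]
    simp
  rw [h1, Matrix.one_apply_eq] at h2
  exact one_ne_zero h2

lemma zf_apply_dot (G : Matrix (Fin n) (Fin n) ℝ) (σ : Fin n → Bool) (q : Fin n → ℝ) (i : Fin n) :
    zf G σ q i = (Am G σ)⁻¹ i ⬝ᵥ q := rfl

lemma rows_nonprop (G : Matrix (Fin n) (Fin n) ℝ) (σ : Fin n → Bool)
    (hdet : (Am G σ).det ≠ 0) {i j : Fin n} (hij : i ≠ j) (c : ℝ)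
    (h : ∀ q, zf G σ q j = c * zf G σ q i) : False := by
  have hvec : ∀ k, (Am G σ)⁻¹ j k = c * (Am G σ)⁻¹ i k := by
    intro k
    have := h (Pi.single k 1)
    rw [zf_apply_dot, zf_apply_dot, dotProduct_single, dotProduct_single,
      mul_one, mul_one] at this
    exact this
  have h1 := Matrix.nonsing_inv_mul (Am G σ) (isUnit_iff_ne_zero.mpr hdet)
  have h2 : ((Am G σ)⁻¹ * Am G σ) j j = c * ((Am G σ)⁻¹ * Am G σ) i j := by
    rw [Matrix.mul_apply, Matrix.mul_apply, Finset.mul_sum]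
    exact Finset.sum_congr rfl fun k _ => by rw [hvec k, mul_assoc]
  rw [h1, Matrix.one_apply_eq, Matrix.one_apply_ne hij] at h2
  simp at h2

def flip (σ : Fin n → Bool) (i : Fin n) : Fin n → Bool := Function.update σ i (!(σ i))

lemma flip_apply_ne (σ : Fin n → Bool) {i j : Fin n} (h : j ≠ i) : flip σ i j = σ j :=
  Function.update_of_ne h _ _

lemma flip_apply_self (σ : Fin n → Bool) (i : Fin n) : flip σ i i = !(σ i) :=
  Function.update_self _ _ _

lemma flip_ne (σ : Fin n → Bool) (i : Fin n) : flip σ i ≠ σ := by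
  intro h
  have := congrFun h i
  rw [flip_apply_self] at this
  exact (Bool.not_ne_self (σ i)) this

lemma flip_flip (σ : Fin n → Bool) (i : Fin n) : flip (flip σ i) i = σ := by
  funext j
  by_cases hj : j = i
  · subst hj
    rw [flip_apply_self, flip_apply_self, Bool.not_not]
  · rw [flip_apply_ne _ hj, flip_apply_ne _ hj]

lemma sgn_flip_self (σ : Fin n → Bool) (i : Fin n) : sgn (flip σ i) i = - sgn σ i := by
  unfold sgn
  rw [flip_apply_self]
  cases σ i <;> simp

lemma sgn_flip_ne (σ : Fin n → Bool) {i j : Fin n} (h : j ≠ i) : sgn (flip σ i) j = sgn σ j := by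
  unfold sgn
  rw [flip_apply_ne _ h]

lemma Am_flip_mulVec (G : Matrix (Fin n) (Fin n) ℝ) (σ : Fin n → Bool) (i : Fin n)
    (z : Fin n → ℝ) (hzi : z i = 0) : Am G (flip σ i) *ᵥ z = Am G σ *ᵥ z := by
  ext k
  show (Am G (flip σ i)) k ⬝ᵥ z = (Am G σ) k ⬝ᵥ z
  unfold dotProduct
  refine Finset.sum_congr rfl fun j _ => ?_
  by_cases hj : j = i
  · subst hj
    rw [hzi, mul_zero, mul_zero]
  · have : flip σ i j = σ j := flip_apply_ne _ hj
    simp only [Am, Matrix.of_apply, this]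

lemma zf_flip_eq (G : Matrix (Fin n) (Fin n) ℝ) (σ : Fin n → Bool) (i : Fin n) (q : Fin n → ℝ)
    (hdet : (Am G σ).det ≠ 0) (hdet' : (Am G (flip σ i)).det ≠ 0)
    (hq : zf G σ q i = 0) : zf G (flip σ i) q = zf G σ q := by
  have h1 : Am G (flip σ i) *ᵥ (zf G σ q) = q := by
    rw [Am_flip_mulVec G σ i _ hq, zf_spec G σ hdet q]
  have h2 := zf_unique G (flip σ i) hdet' (zf G σ q)
  rw [h1] at h2
  exact h2

lemma row_prop (G : Matrix (Fin n) (Fin n) ℝ) (σ : Fin n → Bool) (i : Fin n)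
    (hdet : (Am G σ).det ≠ 0) (hdet' : (Am G (flip σ i)).det ≠ 0) :
    ∃ c : ℝ, c ≠ 0 ∧ ∀ q, zf G (flip σ i) q i = c * zf G σ q i := by
  have h : ∀ q, (Am G σ)⁻¹ i ⬝ᵥ q = 0 → (Am G (flip σ i))⁻¹ i ⬝ᵥ q = 0 := by
    intro q hq
    rw [← zf_apply_dot] at hq ⊢
    rw [zf_flip_eq G σ i q hdet hdet' hq]
    exact hq
  obtain ⟨c, hc, hcf⟩ := functional_prop (row_ne_zero G σ hdet i)
    (row_ne_zero G (flip σ i) hdet' i) h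
  exact ⟨c, hc, fun q => by rw [zf_apply_dot, zf_apply_dot, hcf q]⟩

lemma dense_avoid (u : Fin n → ℝ) (hu : u ≠ 0) (κ : ℝ) :
    Dense {p : Fin n → ℝ | u ⬝ᵥ p ≠ κ} := by
  rw [Metric.dense_iff]
  intro x r hr
  by_cases hx : u ⬝ᵥ x ≠ κ
  · exact ⟨x, Metric.mem_ball_self hr, hx⟩
  · push_neg at hx
    have hnorm : (0:ℝ) < ‖u‖ + 1 := by positivity
    set δ : ℝ := r / (2 * (‖u‖ + 1)) with hδdef
    have hδ : 0 < δ := by positivity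
    refine ⟨x + δ • u, ?_, ?_⟩
    · rw [Metric.mem_ball, dist_eq_norm]
      have : x + δ • u - x = δ • u := by abel
      rw [this, norm_smul, Real.norm_eq_abs, abs_of_pos hδ]
      have h1 : δ * ‖u‖ < δ * (‖u‖ + 1) := by nlinarith
      have h2 : δ * (‖u‖ + 1) = r / 2 := by
        rw [hδdef]; field_simp
      linarith
    · show u ⬝ᵥ (x + δ • u) ≠ κ
      rw [dotProduct_add, dotProduct_smul, hx, smul_eq_mul]
      have : 0 < δ * (u ⬝ᵥ u) := mul_pos hδ (dot_self_pos hu)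
      intro hcon
      nlinarith

lemma open_avoid (u : Fin n → ℝ) (κ : ℝ) : IsOpen {p : Fin n → ℝ | u ⬝ᵥ p ≠ κ} := by
  have hcont : Continuous fun p : Fin n → ℝ => u ⬝ᵥ p := by
    show Continuous fun p : Fin n → ℝ => ∑ j, u j * p j
    exact continuous_finset_sum _ fun j _ => continuous_const.mul (continuous_apply j)
  have : {p : Fin n → ℝ | u ⬝ᵥ p ≠ κ} = (fun p : Fin n → ℝ => u ⬝ᵥ p) ⁻¹' {y | y ≠ κ} := rfl
  rw [this]
  exact hcont.isOpen_preimage _ isOpen_ne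

lemma exists_avoiding {ι : Type*} [DecidableEq ι] (F : Finset ι) (u : ι → (Fin n → ℝ)) (κ : ι → ℝ)
    (hu : ∀ k ∈ F, u k ≠ 0) (x₀ : Fin n → ℝ) (ρ : ℝ) (hρ : 0 < ρ) :
    ∃ p : Fin n → ℝ, dist p x₀ < ρ ∧ ∀ k ∈ F, u k ⬝ᵥ p ≠ κ k := by
  have hdense : Dense (⋂ k ∈ F, {p : Fin n → ℝ | u k ⬝ᵥ p ≠ κ k}) := by
    induction F using Finset.induction_on with
    | empty => simpa using dense_univ
    | insert a s hnotmem ih =>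
      rw [Finset.set_biInter_insert]
      have hua : u a ≠ 0 := hu a (Finset.mem_insert_self a s)
      have hds : Dense (⋂ k ∈ s, {p : Fin n → ℝ | u k ⬝ᵥ p ≠ κ k}) :=
        ih fun k hk => hu k (Finset.mem_insert_of_mem hk)
      exact (dense_avoid (u a) hua (κ a)).inter_of_isOpen_left hds (open_avoid (u a) (κ a))
  obtain ⟨p, hp1, hp2⟩ := (Metric.dense_iff.mp hdense) x₀ ρ hρ
  refine ⟨p, Metric.mem_ball.mp hp1, ?_⟩
  intro k hk
  exact Set.mem_iInter₂.mp hp2 k hk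

/-! ### 1-D parity machinery -/

lemma uniform_eps {α : Type*} [Fintype α] (Q : α → ℝ → Prop)
    (hmono : ∀ a ε ε', 0 < ε' → ε' ≤ ε → Q a ε → Q a ε')
    (h : ∀ a, ∃ ε, 0 < ε ∧ Q a ε) : ∃ ε, 0 < ε ∧ ∀ a, Q a ε := by
  classical
  choose f hf hf2 using h
  rcases isEmpty_or_nonempty α with hα | hα
  · exact ⟨1, one_pos, fun a => (IsEmpty.false a).elim⟩
  · have hne : (Finset.univ : Finset α).Nonempty := Finset.univ_nonempty
    refine ⟨Finset.univ.inf' hne f, ?_, ?_⟩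
    · exact (Finset.lt_inf'_iff _).mpr fun a _ => hf a
    · intro a
      refine hmono a (f a) _ ((Finset.lt_inf'_iff _).mpr fun b _ => hf b) ?_ (hf2 a)
      exact Finset.inf'_le _ (Finset.mem_univ a)

lemma near_same_sign {x v : ℝ} (h : |x - v| < |v|) : (0 < x ↔ 0 < v) ∧ x ≠ 0 := by
  have hv : v ≠ 0 := by
    intro h0
    rw [h0] at h
    simp at h
    exact absurd h (by simp [abs_nonneg])
  rcases hv.lt_or_gt with hv' | hv'
  · rw [abs_of_neg hv'] at h
    rcases abs_lt.mp h with ⟨h1, h2⟩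
    constructor
    · constructor
      · intro hx; linarith
      · intro hx; linarith
    · intro h0; rw [h0] at h2; linarith
  · rw [abs_of_pos hv'] at h
    rcases abs_lt.mp h with ⟨h1, h2⟩
    constructor
    · constructor
      · intro _; exact hv'
      · intro _; linarith
    · intro h0; rw [h0] at h1; linarith

lemma affine_stab {a b s₀ : ℝ} (h : a + s₀ * b ≠ 0) :
    ∃ ε, 0 < ε ∧ ∀ s, |s - s₀| < ε →
      ((0 < a + s * b ↔ 0 < a + s₀ * b) ∧ a + s * b ≠ 0) := by
  refine ⟨|a + s₀ * b| / (|b| + 1), by positivity, ?_⟩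
  intro s hs
  have hb : (0:ℝ) ≤ |b| := abs_nonneg b
  have key : |(a + s * b) - (a + s₀ * b)| < |a + s₀ * b| := by
    have h1 : (a + s * b) - (a + s₀ * b) = (s - s₀) * b := by ring
    rw [h1, abs_mul]
    calc |s - s₀| * |b| ≤ |s - s₀| * (|b| + 1) := by
          have := abs_nonneg (s - s₀); nlinarith
      _ < (|a + s₀ * b| / (|b| + 1)) * (|b| + 1) := by
          apply mul_lt_mul_of_pos_right hs; positivity
      _ = |a + s₀ * b| := by field_simp
  exact near_same_sign key

lemma sgn_ne_zero (σ : Fin n → Bool) (i : Fin n) : sgn σ i ≠ 0 := by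
  unfold sgn; cases σ i <;> simp

lemma sgn_mul_pos_iff {x y : ℝ} (e : ℝ) (he : e ≠ 0)
    (hiff : 0 < x ↔ 0 < y) (hx : x ≠ 0) (hy : y ≠ 0) :
    (0 < e * x ↔ 0 < e * y) := by
  constructor
  · intro hh
    rcases mul_pos_iff.mp hh with ⟨he1, hx1⟩ | ⟨he1, hx1⟩
    · exact mul_pos_iff.mpr (Or.inl ⟨he1, hiff.mp hx1⟩)
    · refine mul_pos_iff.mpr (Or.inr ⟨he1, ?_⟩)
      exact hy.lt_or_gt.resolve_right fun h2 => absurd (hiff.mpr h2) (asymm hx1)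
  · intro hh
    rcases mul_pos_iff.mp hh with ⟨he1, hy1⟩ | ⟨he1, hy1⟩
    · exact mul_pos_iff.mpr (Or.inl ⟨he1, hiff.mpr hy1⟩)
    · refine mul_pos_iff.mpr (Or.inr ⟨he1, ?_⟩)
      exact hx.lt_or_gt.resolve_right fun h2 => absurd (hiff.mp h2) (asymm hy1)

lemma pair_key (c : ℝ) (hc : c ≠ 0) (w : ℝ) (hw : w ≠ 0) :
    ((if 0 < w then (1:ZMod 2) else 0) + (if 0 < -(c*w) then 1 else 0))
      = (if 0 < c then 1 else 0) := by
  rcases hc.lt_or_gt with hc' | hc' <;> rcases hw.lt_or_gt with hw' | hw'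
  · rw [if_neg (by linarith), if_neg (by nlinarith), if_neg (by linarith)]
    decide
  · rw [if_pos hw', if_pos (by nlinarith), if_neg (by linarith)]
    decide
  · rw [if_neg (by linarith), if_pos (by nlinarith), if_pos hc']
    decide
  · rw [if_pos hw', if_neg (by nlinarith), if_pos hc']
    decide

lemma pair_arith (c u v : ℝ) (hc : c ≠ 0) (hu : u ≠ 0) (hv : v ≠ 0) :
    ((if 0 < u then (1:ZMod 2) else 0) + (if 0 < -(c*u) then 1 else 0)) +
    ((if 0 < v then (1:ZMod 2) else 0) + (if 0 < -(c*v) then 1 else 0)) = 0 := by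
  rw [pair_key c hc u hu, pair_key c hc v hv]
  have : ∀ a : ZMod 2, a + a = 0 := by decide
  exact this _

def seg (q' p : Fin n → ℝ) (s : ℝ) : Fin n → ℝ := fun j => q' j + s * (p j - q' j)

def gg (G : Matrix (Fin n) (Fin n) ℝ) (q' p : Fin n → ℝ) (σ : Fin n → Bool) (i : Fin n)
    (s : ℝ) : ℝ := zf G σ (seg q' p s) i

lemma gg_affine (G : Matrix (Fin n) (Fin n) ℝ) (q' p : Fin n → ℝ) (σ : Fin n → Bool)
    (i : Fin n) (s : ℝ) :
    gg G q' p σ i s = zf G σ q' i + s * (zf G σ (fun j => p j - q' j) i) := by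
  unfold gg
  rw [zf_apply_dot, zf_apply_dot, zf_apply_dot]
  unfold dotProduct seg
  rw [Finset.mul_sum, ← Finset.sum_add_distrib]
  refine Finset.sum_congr rfl fun j _ => by ring

def PP (G : Matrix (Fin n) (Fin n) ℝ) (q' p : Fin n → ℝ) (s : ℝ) : ZMod 2 :=
  ∑ σ : Fin n → Bool, if (∀ i, 0 < sgn σ i * gg G q' p σ i s) then 1 else 0

lemma crossing (G : Matrix (Fin n) (Fin n) ℝ) (hdet : ∀ σ : Fin n → Bool, (Am G σ).det ≠ 0)
    (q' p : Fin n → ℝ)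
    (hC2 : ∀ (s : ℝ) (σ τ : Fin n → Bool) (i j : Fin n), gg G q' p σ i s = 0 →
      gg G q' p τ j s = 0 → ¬(σ = τ ∧ i = j) → ∃ c : ℝ, c ≠ 0 ∧ ∀ r, zf G τ r j = c * zf G σ r i)
    (s₀ : ℝ) :
    ∃ ε, 0 < ε ∧ ∀ s₁ s₂, |s₁ - s₀| < ε → |s₂ - s₀| < ε →
      (∀ σ i, gg G q' p σ i s₁ ≠ 0) → (∀ σ i, gg G q' p σ i s₂ ≠ 0) →
      PP G q' p s₁ = PP G q' p s₂ := by
  have van_unique : ∀ (σ : Fin n → Bool) (i j : Fin n),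
      gg G q' p σ i s₀ = 0 → gg G q' p σ j s₀ = 0 → i = j := by
    intro σ i j hi hj
    by_contra hij
    obtain ⟨c, hc, hcf⟩ := hC2 s₀ σ σ i j hi hj (by tauto)
    exact rows_nonprop G σ (hdet σ) hij c hcf
  obtain ⟨ε, hε, hstab⟩ := uniform_eps (α := (Fin n → Bool) × Fin n)
    (Q := fun a ε => gg G q' p a.1 a.2 s₀ ≠ 0 → ∀ s, |s - s₀| < ε →
      ((0 < gg G q' p a.1 a.2 s ↔ 0 < gg G q' p a.1 a.2 s₀) ∧ gg G q' p a.1 a.2 s ≠ 0))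
    (by
      intro a ε ε' hε' hle hQ hne s hs
      exact hQ hne s (lt_of_lt_of_le hs hle))
    (by
      intro a
      by_cases hne : gg G q' p a.1 a.2 s₀ ≠ 0
      · have h' : zf G a.1 q' a.2 + s₀ * (zf G a.1 (fun j => p j - q' j) a.2) ≠ 0 := by
          rw [← gg_affine]; exact hne
        obtain ⟨ε, hε, hst⟩ := affine_stab h'
        refine ⟨ε, hε, fun _ s hs => ?_⟩
        have := hst s hs
        rw [← gg_affine, ← gg_affine] at this
        exact this
      · exact ⟨1, one_pos, fun h => absurd h hne⟩)
  refine ⟨ε, hε, ?_⟩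
  intro s₁ s₂ h₁ h₂ hnr₁ hnr₂
  have cancel : ∀ a b : ZMod 2, a + b = 0 → a = b := by decide
  apply cancel
  rw [PP, PP, ← Finset.sum_add_distrib]
  set Chg : Finset (Fin n → Bool) :=
    Finset.univ.filter (fun σ => ∃ i, gg G q' p σ i s₀ = 0) with hChg
  have iff_of_stab : ∀ (σ : Fin n → Bool) (j : Fin n) (s : ℝ), |s - s₀| < ε →
      gg G q' p σ j s₀ ≠ 0 → gg G q' p σ j s ≠ 0 →
      (0 < sgn σ j * gg G q' p σ j s ↔ 0 < sgn σ j * gg G q' p σ j s₀) := by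
    intro σ j s hs hj0 hjs
    have hst := hstab (σ, j) hj0 s hs
    exact sgn_mul_pos_iff (sgn σ j) (sgn_ne_zero σ j) hst.1 hst.2 hj0
  have hnonchg : ∀ σ ∈ Finset.univ, σ ∉ Chg →
      ((if (∀ i, 0 < sgn σ i * gg G q' p σ i s₁) then (1:ZMod 2) else 0) +
       (if (∀ i, 0 < sgn σ i * gg G q' p σ i s₂) then 1 else 0)) = 0 := by
    intro σ _ hσ
    rw [hChg, Finset.mem_filter] at hσ
    push_neg at hσ
    have hnv : ∀ i, gg G q' p σ i s₀ ≠ 0 := hσ (Finset.mem_univ σ)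
    have hiff : (∀ i, 0 < sgn σ i * gg G q' p σ i s₁) ↔
        (∀ i, 0 < sgn σ i * gg G q' p σ i s₂) := by
      apply forall_congr'
      intro i
      rw [iff_of_stab σ i s₁ h₁ (hnv i) (hnr₁ σ i),
        iff_of_stab σ i s₂ h₂ (hnv i) (hnr₂ σ i)]
    rw [if_congr hiff rfl rfl]
    have : ∀ a : ZMod 2, a + a = 0 := by decide
    exact this _
  rw [← Finset.sum_subset (Finset.subset_univ Chg) hnonchg]
  refine Finset.sum_involution
    (fun σ hσ => flip σ (Classical.choose ((Finset.mem_filter.mp hσ).2))) ?hpair ?hne ?hmem ?hinv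
  case hne =>
    intro σ hσ _
    exact flip_ne σ _
  case hmem =>
    intro σ hσ
    have hi : gg G q' p σ (Classical.choose ((Finset.mem_filter.mp hσ).2)) s₀ = 0 :=
      Classical.choose_spec ((Finset.mem_filter.mp hσ).2)
    set i := Classical.choose ((Finset.mem_filter.mp hσ).2)
    have hzfeq : zf G (flip σ i) (seg q' p s₀) = zf G σ (seg q' p s₀) :=
      zf_flip_eq G σ i _ (hdet σ) (hdet (flip σ i)) hi
    show flip σ i ∈ Chg
    refine Finset.mem_filter.mpr ⟨Finset.mem_univ _, ⟨i, ?_⟩⟩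
    show zf G (flip σ i) (seg q' p s₀) i = 0
    rw [hzfeq]
    exact hi
  case hinv =>
    intro σ hσ
    have hi : gg G q' p σ (Classical.choose ((Finset.mem_filter.mp hσ).2)) s₀ = 0 :=
      Classical.choose_spec ((Finset.mem_filter.mp hσ).2)
    set i := Classical.choose ((Finset.mem_filter.mp hσ).2)
    have hzfeq : zf G (flip σ i) (seg q' p s₀) = zf G σ (seg q' p s₀) :=
      zf_flip_eq G σ i _ (hdet σ) (hdet (flip σ i)) hi
    have huniq : ∀ j, gg G q' p σ j s₀ = 0 → j = i := fun j hj =>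
      van_unique σ j i hj hi
    have key : ∀ h2 : ∃ j, gg G q' p (flip σ i) j s₀ = 0,
        flip (flip σ i) (Classical.choose h2) = σ := by
      intro h2
      have hj : gg G q' p (flip σ i) (Classical.choose h2) s₀ = 0 := Classical.choose_spec h2
      have hj' : gg G q' p σ (Classical.choose h2) s₀ = 0 :=
        (congrFun hzfeq (Classical.choose h2)).symm.trans hj
      rw [huniq _ hj']
      exact flip_flip σ i
    exact key _
  case hpair =>
    intro σ hσ
    beta_reduce
    set i := Classical.choose ((Finset.mem_filter.mp hσ).2) with hidef
    have hi : gg G q' p σ i s₀ = 0 := Classical.choose_spec ((Finset.mem_filter.mp hσ).2)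
    set τ := flip σ i with hτdef
    have huniq : ∀ j, gg G q' p σ j s₀ = 0 → j = i := fun j hj => van_unique σ j i hj hi
    have hzfeq : zf G τ (seg q' p s₀) = zf G σ (seg q' p s₀) :=
      zf_flip_eq G σ i _ (hdet σ) (hdet τ) hi
    have hgτ : ∀ j, gg G q' p τ j s₀ = gg G q' p σ j s₀ := fun j => congrFun hzfeq j
    obtain ⟨c, hc, hcf⟩ := row_prop G σ i (hdet σ) (hdet τ)
    have hgc : ∀ s, gg G q' p τ i s = c * gg G q' p σ i s := fun s => hcf (seg q' p s)
    by_cases hOK : ∀ j, j ≠ i → 0 < sgn σ j * gg G q' p σ j s₀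
    · -- reduction of indicators to the i-th condition
      have hred : ∀ s, (∀ σ' i', gg G q' p σ' i' s ≠ 0) → |s - s₀| < ε →
          (((∀ j, 0 < sgn σ j * gg G q' p σ j s) ↔ 0 < sgn σ i * gg G q' p σ i s)
          ∧ ((∀ j, 0 < sgn τ j * gg G q' p τ j s) ↔ 0 < sgn τ i * gg G q' p τ i s)) := by
        intro s hnr hs
        constructor
        · constructor
          · intro h; exact h i
          · intro h j
            by_cases hj : j = i
            · rw [hj]; exact h
            · have hj0 : gg G q' p σ j s₀ ≠ 0 := fun hzz => hj (huniq j hzz)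
              rw [iff_of_stab σ j s hs hj0 (hnr σ j)]
              exact hOK j hj
        · constructor
          · intro h; exact h i
          · intro h j
            by_cases hj : j = i
            · rw [hj]; exact h
            · have hj0 : gg G q' p τ j s₀ ≠ 0 := by
                rw [hgτ j]; exact fun hzz => hj (huniq j hzz)
              rw [iff_of_stab τ j s hs hj0 (hnr τ j)]
              rw [hgτ j, sgn_flip_ne σ hj]
              exact hOK j hj
      have hredi₁ := hred s₁ hnr₁ h₁
      have hredi₂ := hred s₂ hnr₂ h₂
      have hτval : ∀ s, sgn τ i * gg G q' p τ i s
          = -(c * (sgn σ i * gg G q' p σ i s)) := by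
        intro s
        rw [hτdef, sgn_flip_self, hgc s]
        ring
      rw [if_congr hredi₁.1 rfl rfl, if_congr hredi₂.1 rfl rfl,
        if_congr hredi₁.2 rfl rfl, if_congr hredi₂.2 rfl rfl,
        hτval s₁, hτval s₂]
      have hu : sgn σ i * gg G q' p σ i s₁ ≠ 0 :=
        mul_ne_zero (sgn_ne_zero σ i) (hnr₁ σ i)
      have hv : sgn σ i * gg G q' p σ i s₂ ≠ 0 :=
        mul_ne_zero (sgn_ne_zero σ i) (hnr₂ σ i)
      have := pair_arith c (sgn σ i * gg G q' p σ i s₁) (sgn σ i * gg G q' p σ i s₂) hc hu hv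
      linear_combination this
    · push_neg at hOK
      obtain ⟨j, hji, hjn⟩ := hOK
      have hj0 : gg G q' p σ j s₀ ≠ 0 := fun hzz => hji (huniq j hzz)
      have hfail : ∀ s, |s - s₀| < ε → (∀ σ' i', gg G q' p σ' i' s ≠ 0) →
          ¬(∀ k, 0 < sgn σ k * gg G q' p σ k s) ∧ ¬(∀ k, 0 < sgn τ k * gg G q' p τ k s) := by
        intro s hs hnr
        constructor
        · intro h
          exact absurd ((iff_of_stab σ j s hs hj0 (hnr σ j)).mp (h j)) (not_lt.mpr hjn)
        · intro h
          have hj0' : gg G q' p τ j s₀ ≠ 0 := by rw [hgτ j]; exact hj0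
          have := (iff_of_stab τ j s hs hj0' (hnr τ j)).mp (h j)
          rw [hgτ j, sgn_flip_ne σ hji] at this
          exact absurd this (not_lt.mpr hjn)
      have hf₁ := hfail s₁ h₁ hnr₁
      have hf₂ := hfail s₂ h₂ hnr₂
      rw [if_neg hf₁.1, if_neg hf₂.1, if_neg hf₁.2, if_neg hf₂.2]
      decide

lemma global_parity (G : Matrix (Fin n) (Fin n) ℝ)
    (hdet : ∀ σ : Fin n → Bool, (Am G σ).det ≠ 0) (q' p : Fin n → ℝ)
    (h0 : ∀ (σ : Fin n → Bool) (i : Fin n), gg G q' p σ i 0 ≠ 0)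
    (h1 : ∀ (σ : Fin n → Bool) (i : Fin n), gg G q' p σ i 1 ≠ 0)
    (hC2 : ∀ (s : ℝ) (σ τ : Fin n → Bool) (i j : Fin n), gg G q' p σ i s = 0 →
      gg G q' p τ j s = 0 → ¬(σ = τ ∧ i = j) → ∃ c : ℝ, c ≠ 0 ∧ ∀ r, zf G τ r j = c * zf G σ r i) :
    PP G q' p 0 = PP G q' p 1 := by
  -- the root set is finite
  set B : Set ℝ := {s | ∃ σ : Fin n → Bool, ∃ i : Fin n, gg G q' p σ i s = 0} with hB
  have hBfin : B.Finite := by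
    have : B ⊆ ⋃ a : (Fin n → Bool) × Fin n, {s | gg G q' p a.1 a.2 s = 0} := by
      rintro s ⟨σ, i, hs⟩
      exact Set.mem_iUnion.mpr ⟨(σ, i), hs⟩
    refine Set.Finite.subset (Set.finite_iUnion fun a => ?_) this
    apply Set.Subsingleton.finite
    intro s hs t ht
    by_contra hst
    simp only [Set.mem_setOf_eq] at hs ht
    apply h0 a.1 a.2
    rw [gg_affine] at hs ht ⊢
    have hslope : zf G a.1 (fun j => p j - q' j) a.2 = 0 := by
      have hsub : (s - t) * zf G a.1 (fun j => p j - q' j) a.2 = 0 := by linarith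
      rcases mul_eq_zero.mp hsub with h | h
      · exact absurd (by linarith : s = t) hst
      · exact h
    rw [hslope] at hs ⊢
    simpa using hs
  -- crossing data
  have hcross := crossing G hdet q' p hC2
  choose ε hεpos hε using hcross
  -- non-root sample point near each s₀
  have hpsi : ∀ s₀ : ℝ, ∀ δ : ℝ, 0 < δ → ∃ y, |y - s₀| < δ ∧ y ∉ B := by
    intro s₀ δ hδ
    have hinf : (Set.Ioo (s₀ - δ) (s₀ + δ)).Infinite := Set.Ioo_infinite (by linarith)
    obtain ⟨y, hy⟩ := (hinf.diff hBfin).nonempty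
    refine ⟨y, ?_, hy.2⟩
    rcases hy.1 with ⟨hy1, hy2⟩
    rw [abs_lt]; constructor <;> linarith
  have hnonroot : ∀ y, y ∉ B → ∀ (σ : Fin n → Bool) (i : Fin n), gg G q' p σ i y ≠ 0 := by
    intro y hy σ i h
    exact hy ⟨σ, i, h⟩
  choose ψ hψdist hψB using fun s₀ => hpsi s₀ (ε s₀) (hεpos s₀)
  set V : ℝ → ZMod 2 := fun s₀ => PP G q' p (ψ s₀) with hV
  have hVloc : ∀ s₀ s', |s' - s₀| < ε s₀ / 2 → V s' = V s₀ := by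
    intro s₀ s' hs'
    obtain ⟨y, hy1, hy2⟩ := hpsi s' (min (ε s') (ε s₀ / 2)) (lt_min (hεpos s') (by linarith [hεpos s₀]))
    have step1 : PP G q' p (ψ s') = PP G q' p y := by
      refine hε s' (ψ s') y (hψdist s') (lt_of_lt_of_le hy1 (min_le_left _ _))
        (hnonroot _ (hψB s')) (hnonroot _ hy2)
    have step2 : PP G q' p y = PP G q' p (ψ s₀) := by
      refine hε s₀ y (ψ s₀) ?_ (hψdist s₀) (hnonroot _ hy2) (hnonroot _ (hψB s₀))
      have h3 : |y - s'| < ε s₀ / 2 := lt_of_lt_of_le hy1 (min_le_right _ _)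
      calc |y - s₀| = |(y - s') + (s' - s₀)| := by ring_nf
        _ ≤ |y - s'| + |s' - s₀| := abs_add_le _ _
        _ < ε s₀ / 2 + ε s₀ / 2 := by linarith
        _ = ε s₀ := by ring
    show PP G q' p (ψ s') = PP G q' p (ψ s₀)
    rw [step1, step2]
  -- clopen argument
  have hVconst : V 1 = V 0 := by
    set E : Set ℝ := {s | V s = V 0} with hE
    have hopen : IsOpen E := by
      rw [Metric.isOpen_iff]
      intro s₀ hs₀
      refine ⟨ε s₀ / 2, by linarith [hεpos s₀], ?_⟩
      intro s' hsd
      rw [Metric.mem_ball, Real.dist_eq] at hsd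
      show V s' = V 0
      rw [hVloc s₀ s' hsd]
      exact hs₀
    have hclosed : IsOpen Eᶜ := by
      rw [Metric.isOpen_iff]
      intro s₀ hs₀
      refine ⟨ε s₀ / 2, by linarith [hεpos s₀], ?_⟩
      intro s' hsd
      rw [Metric.mem_ball, Real.dist_eq] at hsd
      show ¬ V s' = V 0
      rw [hVloc s₀ s' hsd]
      exact hs₀
    have hclopen : IsClopen E := ⟨⟨hclosed⟩, hopen⟩
    have : E = Set.univ := by
      rcases isClopen_iff.mp hclopen with h | h
      · exfalso
        have : (0:ℝ) ∈ E := rfl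
        rw [h] at this
        exact this
      · exact h
    have h1' : (1:ℝ) ∈ E := by rw [this]; trivial
    exact h1'
  have hP0 : PP G q' p 0 = V 0 := by
    refine hε 0 0 (ψ 0) (by simp [hεpos 0]) (hψdist 0) (fun σ i => h0 σ i) (hnonroot _ (hψB 0))
  have hP1 : PP G q' p 1 = V 1 := by
    refine hε 1 1 (ψ 1) (by simp [hεpos 1]) (hψdist 1) (fun σ i => h1 σ i) (hnonroot _ (hψB 1))
  rw [hP0, hP1, hVconst]

open Filter Topology in
lemma nash_limit (Gk : ℕ → Matrix (Fin n) (Fin n) ℝ) (qk : ℕ → (Fin n → ℝ))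
    (G : Matrix (Fin n) (Fin n) ℝ) (q : Fin n → ℝ)
    (hsub : ∀ m i j, 0 ≤ Gk m i j)
    (hGk : ∀ i j, Tendsto (fun m => Gk m i j) atTop (nhds (G i j)))
    (hqk : ∀ i, Tendsto (fun m => qk m i) atTop (nhds (q i)))
    (C : ℝ) (hbd : ∀ m i, qk m i ≤ C)
    (hex : ∀ m, ∃ x, NashEq (Gk m) (qk m) x) : ∃ x, NashEq G q x := by
  choose x hx using hex
  have hx0 : ∀ m i, 0 ≤ x m i := by
    intro m i
    rw [hx m i]
    exact le_max_left _ _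
  have hxC : ∀ m i, x m i ≤ max C 0 := by
    intro m i
    rw [hx m i]
    have hS : 0 ≤ ∑ j ∈ Finset.univ.erase i, Gk m i j * x m j :=
      Finset.sum_nonneg fun j _ => mul_nonneg (hsub m i j) (hx0 m j)
    have h1 : qk m i - ∑ j ∈ Finset.univ.erase i, Gk m i j * x m j ≤ C := by
      have := hbd m i; linarith
    rw [max_comm]
    exact max_le_max h1 le_rfl
  have hmem : ∀ m, x m ∈ Set.Icc (fun _ => (0:ℝ)) (fun _ => max C 0) := by
    intro m
    rw [Set.mem_Icc]
    exact ⟨fun i => hx0 m i, fun i => hxC m i⟩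
  have hK : IsCompact (Set.Icc (fun _ => (0:ℝ)) (fun _ : Fin n => max C 0)) := isCompact_Icc
  obtain ⟨a, _, φ, hφmono, hφtend⟩ := hK.tendsto_subseq hmem
  have hφtop : Tendsto φ atTop atTop := hφmono.tendsto_atTop
  have hcoord : ∀ j, Tendsto (fun m => x (φ m) j) atTop (nhds (a j)) := by
    intro j
    have := hφtend
    rw [tendsto_pi_nhds] at this
    exact this j
  refine ⟨a, ?_⟩
  intro i
  have hR : Tendsto (fun m => max 0 (qk (φ m) i - ∑ j ∈ Finset.univ.erase i,
      Gk (φ m) i j * x (φ m) j)) atTop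
      (nhds (max 0 (q i - ∑ j ∈ Finset.univ.erase i, G i j * a j))) := by
    refine Tendsto.max tendsto_const_nhds ?_
    refine Tendsto.sub ((hqk i).comp hφtop) ?_
    refine tendsto_finset_sum _ fun j _ => ?_
    exact ((hGk i j).comp hφtop).mul (hcoord j)
  have hL' : Tendsto (fun m => max 0 (qk (φ m) i - ∑ j ∈ Finset.univ.erase i,
      Gk (φ m) i j * x (φ m) j)) atTop (nhds (a i)) := by
    refine Tendsto.congr (fun m => ?_) (hcoord i)
    exact hx (φ m) i
  exact tendsto_nhds_unique hL' hR

lemma seg_zero (q' p : Fin n → ℝ) : seg q' p 0 = q' := by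
  funext j; simp [seg]

lemma seg_one (q' p : Fin n → ℝ) : seg q' p 1 = p := by
  funext j; simp [seg]

lemma gg_zero (G : Matrix (Fin n) (Fin n) ℝ) (q' p : Fin n → ℝ) (σ : Fin n → Bool) (i : Fin n) :
    gg G q' p σ i 0 = zf G σ q' i := by
  show zf G σ (seg q' p 0) i = zf G σ q' i
  rw [seg_zero]

lemma gg_one (G : Matrix (Fin n) (Fin n) ℝ) (q' p : Fin n → ℝ) (σ : Fin n → Bool) (i : Fin n) :
    gg G q' p σ i 1 = zf G σ p i := by
  show zf G σ (seg q' p 1) i = zf G σ p i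
  rw [seg_one]

lemma zf_sub (G : Matrix (Fin n) (Fin n) ℝ) (σ : Fin n → Bool) (q' p : Fin n → ℝ) (i : Fin n) :
    zf G σ (fun j => p j - q' j) i = zf G σ p i - zf G σ q' i := by
  rw [zf_apply_dot, zf_apply_dot, zf_apply_dot]
  unfold dotProduct
  rw [← Finset.sum_sub_distrib]
  exact Finset.sum_congr rfl fun j _ => by ring

lemma filter_val_neg (G : Matrix (Fin n) (Fin n) ℝ) (hsub : ∀ i j, 0 ≤ G i j)
    (hdet : ∀ σ : Fin n → Bool, (Am G σ).det ≠ 0) (p : Fin n → ℝ) (hp : ∀ i, p i < 0) :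
    Finset.univ.filter (fun σ => Val G σ p) = {fun _ => false} := by
  ext σ
  simp only [Finset.mem_filter, Finset.mem_univ, true_and, Finset.mem_singleton]
  constructor
  · intro h
    exact val_neg_unique G hsub p hp σ (hdet σ) h
  · rintro rfl
    exact val_false G p hp

lemma nash_near (G : Matrix (Fin n) (Fin n) ℝ) (hsub : ∀ i j, 0 ≤ G i j)
    (hdet : ∀ σ : Fin n → Bool, (Am G σ).det ≠ 0) (q : Fin n → ℝ) (δ : ℝ) (hδ : 0 < δ) :
    ∃ q', dist q' q < δ ∧ ∃ x, NashEq G q' x := by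
  classical
  obtain ⟨q', hq'd, hq'w⟩ := exists_avoiding (ι := (Fin n → Bool) × Fin n) Finset.univ
    (fun a => (Am G a.1)⁻¹ a.2) (fun _ => 0)
    (fun a _ => row_ne_zero G a.1 (hdet a.1) a.2) q δ hδ
  have hq'wall : ∀ (σ : Fin n → Bool) (i : Fin n), zf G σ q' i ≠ 0 := by
    intro σ i
    rw [zf_apply_dot]
    exact hq'w (σ, i) (Finset.mem_univ _)
  set Rel : ((Fin n → Bool) × Fin n) → ((Fin n → Bool) × Fin n) → Prop :=
    fun a b => ∃ c : ℝ, c ≠ 0 ∧ ∀ r, zf G b.1 r b.2 = c * zf G a.1 r a.2 with hRel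
  set w : ((Fin n → Bool) × Fin n) → ((Fin n → Bool) × Fin n) → (Fin n → ℝ) :=
    fun a b => ((Am G a.1)⁻¹ a.2 ⬝ᵥ q') • (Am G b.1)⁻¹ b.2
      - ((Am G b.1)⁻¹ b.2 ⬝ᵥ q') • (Am G a.1)⁻¹ a.2 with hwdef
  have hwne : ∀ a b, ¬ Rel a b → w a b ≠ 0 := by
    intro a b hrel hw0
    apply hrel
    set u := (Am G a.1)⁻¹ a.2 with hu
    set v := (Am G b.1)⁻¹ b.2 with hv
    have hx0 : u ⬝ᵥ q' ≠ 0 := by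
      rw [← zf_apply_dot]; exact hq'wall a.1 a.2
    have hy0 : v ⬝ᵥ q' ≠ 0 := by
      rw [← zf_apply_dot]; exact hq'wall b.1 b.2
    have hveq : (u ⬝ᵥ q') • v = (v ⬝ᵥ q') • u := by
      have := sub_eq_zero.mp hw0
      exact this
    have hvfun : v = ((v ⬝ᵥ q') / (u ⬝ᵥ q')) • u := by
      funext k
      have hk := congrFun hveq k
      simp only [Pi.smul_apply, smul_eq_mul] at hk ⊢
      rw [div_mul_eq_mul_div, eq_div_iff hx0]
      linear_combination hk
    refine ⟨(v ⬝ᵥ q') / (u ⬝ᵥ q'), div_ne_zero hy0 hx0, ?_⟩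
    intro r
    rw [zf_apply_dot, zf_apply_dot, ← hu, ← hv]
    conv_lhs => rw [hvfun]
    rw [smul_dotProduct, smul_eq_mul]
  obtain ⟨p, hpd, hpavoid⟩ := exists_avoiding
    (ι := ((Fin n → Bool) × Fin n) ⊕ (((Fin n → Bool) × Fin n) × ((Fin n → Bool) × Fin n)))
    Finset.univ
    (fun k => Sum.elim (fun a => (Am G a.1)⁻¹ a.2)
      (fun ab => if Rel ab.1 ab.2 then (Am G ab.1.1)⁻¹ ab.1.2 else w ab.1 ab.2) k)
    (fun _ => 0)
    (by
      rintro (a | ab) _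
      · exact row_ne_zero G a.1 (hdet a.1) a.2
      · simp only [Sum.elim_inr]
        split_ifs with h
        · exact row_ne_zero G ab.1.1 (hdet ab.1.1) ab.1.2
        · exact hwne ab.1 ab.2 h)
    (fun _ => (-2 : ℝ)) 1 one_pos
  have hpneg : ∀ j, p j < 0 := by
    intro j
    have h1 : dist (p j) ((fun _ => (-2:ℝ)) j) ≤ dist p (fun _ => (-2:ℝ)) :=
      dist_le_pi_dist p (fun _ => (-2:ℝ)) j
    have h2 := lt_of_le_of_lt h1 hpd
    rw [Real.dist_eq] at h2
    rcases abs_lt.mp h2 with ⟨_, hb⟩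
    have hb2 : p j - (-2) < 1 := by simpa using hb
    linarith
  have hpwall : ∀ (σ : Fin n → Bool) (i : Fin n), zf G σ p i ≠ 0 := by
    intro σ i
    rw [zf_apply_dot]
    exact hpavoid (Sum.inl (σ, i)) (Finset.mem_univ _)
  have hC2 : ∀ (s : ℝ) (σ τ : Fin n → Bool) (i j : Fin n), gg G q' p σ i s = 0 →
      gg G q' p τ j s = 0 → ¬(σ = τ ∧ i = j) →
      ∃ c : ℝ, c ≠ 0 ∧ ∀ r, zf G τ r j = c * zf G σ r i := by
    intro s σ τ i j hgs hgt _
    by_cases hrel : Rel (σ, i) (τ, j)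
    · exact hrel
    · exfalso
      have hwp := hpavoid (Sum.inr ((σ, i), (τ, j))) (Finset.mem_univ _)
      simp only [Sum.elim_inr] at hwp
      rw [if_neg hrel] at hwp
      apply hwp
      have e₁ : zf G σ q' i + s * (zf G σ p i - zf G σ q' i) = 0 := by
        rw [← zf_sub G σ q' p i, ← gg_affine]
        exact hgs
      have e₂ : zf G τ q' j + s * (zf G τ p j - zf G τ q' j) = 0 := by
        rw [← zf_sub G τ q' p j, ← gg_affine]
        exact hgt
      show w (σ, i) (τ, j) ⬝ᵥ p = 0
      rw [hwdef]
      simp only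
      rw [sub_dotProduct, smul_dotProduct, smul_dotProduct]
      simp only [smul_eq_mul, ← zf_apply_dot]
      linear_combination (zf G τ p j - zf G τ q' j) * e₁ - (zf G σ p i - zf G σ q' i) * e₂
  have h0 : ∀ (σ : Fin n → Bool) (i : Fin n), gg G q' p σ i 0 ≠ 0 := by
    intro σ i
    rw [gg_zero]
    exact hq'wall σ i
  have h1 : ∀ (σ : Fin n → Bool) (i : Fin n), gg G q' p σ i 1 ≠ 0 := by
    intro σ i
    rw [gg_one]
    exact hpwall σ i
  have hpar := global_parity G hdet q' p h0 h1 hC2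
  have hPP1 : PP G q' p 1 = 1 := by
    rw [PP]
    have hcong : ∀ σ : Fin n → Bool,
        (∀ i, 0 < sgn σ i * gg G q' p σ i 1) ↔ Val G σ p := by
      intro σ
      unfold Val
      apply forall_congr'
      intro i
      rw [gg_one]
    rw [Finset.sum_congr rfl (fun σ _ => if_congr (hcong σ) rfl rfl)]
    rw [Finset.sum_boole]
    rw [filter_val_neg G hsub hdet p hpneg]
    simp
  have hPP0 : PP G q' p 0 = 1 := by rw [hpar]; exact hPP1
  have hexv : ∃ σ : Fin n → Bool, Val G σ q' := by
    by_contra hall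
    push_neg at hall
    have hzero : PP G q' p 0 = 0 := by
      rw [PP]
      refine Finset.sum_eq_zero fun σ _ => ?_
      rw [if_neg]
      intro hv
      refine hall σ ?_
      intro i
      have h := hv i
      rwa [gg_zero] at h
    rw [hzero] at hPP0
    exact absurd hPP0 (by decide)
  obtain ⟨σ, hσ⟩ := hexv
  exact ⟨q', hq'd, val_nash G σ q' (hdet σ) hσ⟩

open Filter Topology in
lemma nash_generic (G : Matrix (Fin n) (Fin n) ℝ) (hsub : ∀ i j, 0 ≤ G i j)
    (hdet : ∀ σ : Fin n → Bool, (Am G σ).det ≠ 0) (q : Fin n → ℝ) : ∃ x, NashEq G q x := by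
  have hex : ∀ m : ℕ, ∃ q', dist q' q < 1/(m+1) ∧ ∃ x, NashEq G q' x := fun m =>
    nash_near G hsub hdet q (1/(m+1)) (by positivity)
  choose qk hqk hx using hex
  have hmle : ∀ m : ℕ, 1/((m:ℝ)+1) ≤ 1 := by
    intro m
    rw [div_le_one (by positivity)]
    have : (0:ℝ) ≤ (m:ℝ) := Nat.cast_nonneg m
    linarith
  refine nash_limit (fun _ => G) qk G q (fun _ => hsub) (fun i j => tendsto_const_nhds) ?_
    ((∑ j, |q j|) + 1) ?_ hx
  · intro i
    rw [tendsto_iff_dist_tendsto_zero]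
    have hle : ∀ m, dist (qk m i) (q i) ≤ 1/(m+1) := fun m =>
      le_trans (dist_le_pi_dist (qk m) q i) (le_of_lt (hqk m))
    exact squeeze_zero (fun m => dist_nonneg) hle tendsto_one_div_add_atTop_nhds_zero_nat
  · intro m i
    have h2 := lt_of_le_of_lt (dist_le_pi_dist (qk m) q i) (hqk m)
    rw [Real.dist_eq] at h2
    have h4 := (abs_lt.mp h2).2
    have h3 : q i ≤ ∑ j, |q j| :=
      le_trans (le_abs_self _)
        (Finset.single_le_sum (fun j _ => abs_nonneg (q j)) (Finset.mem_univ i))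
    linarith [hmle m]

open Polynomial in
lemma exists_good_scale (G : Matrix (Fin n) (Fin n) ℝ) (m : ℕ) :
    ∃ t : ℝ, (1 - 1/(m+1) < t ∧ t ≤ 1) ∧ ∀ σ : Fin n → Bool, (Am (t • G) σ).det ≠ 0 := by
  classical
  set Ap : (Fin n → Bool) → Matrix (Fin n) (Fin n) (Polynomial ℝ) := fun σ =>
    Matrix.of fun i j => if σ j then (if i = j then 1 else Polynomial.C (G i j) * Polynomial.X)
      else (if i = j then 1 else 0) with hAp
  have hmap : ∀ (t : ℝ) (σ : Fin n → Bool), (Ap σ).map (Polynomial.eval t) = Am (t • G) σ := by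
    intro t σ
    ext i j
    by_cases hσ : σ j <;> by_cases hij : i = j
    · simp [hAp, Am, Mm, hσ, hij]
    · simp only [hAp, Matrix.map_apply, Matrix.of_apply, if_pos hσ, if_neg hij,
        Polynomial.eval_mul, Polynomial.eval_C, Polynomial.eval_X, Am, Mm,
        Matrix.smul_apply, smul_eq_mul]
      ring
    · simp [hAp, Am, Mm, hσ, hij]
    · simp [hAp, Am, Mm, hσ, hij]
  have hdet_eval : ∀ (t : ℝ) (σ : Fin n → Bool),
      (Am (t • G) σ).det = Polynomial.eval t ((Ap σ).det) := by
    intro t σ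
    have h := RingHom.map_det (Polynomial.evalRingHom t) (Ap σ)
    simp only [Polynomial.coe_evalRingHom] at h
    rw [← hmap t σ]
    exact h.symm
  have hne : ∀ σ : Fin n → Bool, (Ap σ).det ≠ 0 := by
    intro σ h0
    have h1 := hdet_eval 0 σ
    rw [h0] at h1
    simp only [Polynomial.eval_zero] at h1
    have h2 : Am ((0:ℝ) • G) σ = 1 := by
      ext i j
      by_cases hσ : σ j <;> by_cases hij : i = j <;>
        simp [Am, Mm, hσ, hij, Matrix.one_apply, Matrix.smul_apply]
    rw [h2, Matrix.det_one] at h1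
    exact one_ne_zero h1
  have hroots : (⋃ σ : Fin n → Bool, {t : ℝ | Polynomial.eval t ((Ap σ).det) = 0}).Finite :=
    Set.finite_iUnion fun σ => Polynomial.finite_setOf_isRoot (hne σ)
  have hIoo : (Set.Ioo (1 - 1/((m:ℝ)+1)) 1).Infinite := by
    apply Set.Ioo_infinite
    have : (0:ℝ) < 1/((m:ℝ)+1) := by positivity
    linarith
  obtain ⟨t, ht⟩ := (hIoo.diff hroots).nonempty
  rcases ht with ⟨⟨ht1, ht2⟩, htB⟩
  refine ⟨t, ⟨ht1, le_of_lt ht2⟩, ?_⟩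
  intro σ
  rw [hdet_eval t σ]
  intro h0
  exact htB (Set.mem_iUnion.mpr ⟨σ, h0⟩)

open Filter Topology in
lemma nash_all (G : Matrix (Fin n) (Fin n) ℝ) (hsub : ∀ i j, 0 ≤ G i j) (q : Fin n → ℝ) :
    ∃ x, NashEq G q x := by
  have hscale := fun m : ℕ => exists_good_scale G m
  choose t ht hdet using hscale
  have hmle : ∀ m : ℕ, 1/((m:ℝ)+1) ≤ 1 := by
    intro m
    rw [div_le_one (by positivity)]
    have : (0:ℝ) ≤ (m:ℝ) := Nat.cast_nonneg m
    linarith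
  have ht0 : ∀ m, 0 ≤ t m := by
    intro m
    have h1 := (ht m).1
    have := hmle m
    linarith
  have htt : Tendsto t atTop (nhds 1) := by
    have hlow : Tendsto (fun m : ℕ => 1 - 1/((m:ℝ)+1)) atTop (nhds 1) := by
      have h2 := (tendsto_const_nhds (x := (1:ℝ)) (f := (atTop : Filter ℕ))).sub
        tendsto_one_div_add_atTop_nhds_zero_nat
      simpa using h2
    exact tendsto_of_tendsto_of_tendsto_of_le_of_le hlow tendsto_const_nhds
      (fun m => le_of_lt (ht m).1) (fun m => (ht m).2)
  refine nash_limit (fun m => t m • G) (fun _ => q) G q ?_ ?_ (fun i => tendsto_const_nhds)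
    (∑ j, |q j|) ?_ ?_
  · intro m i j
    show 0 ≤ (t m • G) i j
    rw [Matrix.smul_apply, smul_eq_mul]
    exact mul_nonneg (ht0 m) (hsub i j)
  · intro i j
    have h1 := htt.mul_const (G i j)
    rw [one_mul] at h1
    refine h1.congr fun m => ?_
    show t m * G i j = (t m • G) i j
    rw [Matrix.smul_apply, smul_eq_mul]
  · intro m i
    exact le_trans (le_abs_self _)
      (Finset.single_le_sum (fun j _ => abs_nonneg (q j)) (Finset.mem_univ i))
  · intro m
    refine nash_generic (t m • G) ?_ (hdet m) q
    intro i j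
    rw [Matrix.smul_apply, smul_eq_mul]
    exact mul_nonneg (ht0 m) (hsub i j)

end
end PGAux


theorem exists_nash_of_substitutes (n : ℕ) (hn : 1 ≤ n) (G : Matrix (Fin n) (Fin n) ℝ)
    (hdiag : ∀ i, G i i = 0) (hsub : ∀ i j, 0 ≤ G i j) :
    ∀ q : Fin n → ℝ, ∃ x : Fin n → ℝ, NashEq G q x := by
  intro q
  exact PGAux.nash_all G hsub q
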